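/- arXiv:2406.06011 — 3 statements merged into one kernel-verified Lean document; each statement's English description precedes it below -/
import Mathlib

section
/- Let α : ℝ → ℝ be given by α(t) = t − 1, and let w : ℝ → ℝ be the measurable function defined by w(t) = 1/2 for all t ≥ 0 and w(t) = (m+1)/m for t ∈ [−m, −m+1) for each m ∈ ℕ. Then the weighted composition operator T̃_{α,w} on L²(ℝ) (with Lebesgue measure), defined by T̃_{α,w}(f) = w·(f∘α), is hypercyclic on L²(ℝ) but is not topologically Cesàro hyper-transitive on L²(ℝ). -/
open Filter MeasureTheory

open Finset ENNReal

namespace CesaroAux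

/-- `cf t = 1` for `t ≥ 0`, and `cf t = ⌈-t⌉` for `t < 0`. -/
noncomputable def cf (t : ℝ) : ℝ := if 0 ≤ t then 1 else (⌈-t⌉₊ : ℝ)

/-- Explicit formula for the weight `w`. -/
noncomputable def vf (t : ℝ) : ℝ := if 0 ≤ t then 1/2 else (cf t + 1) / cf t

noncomputable def ef (t : ℝ) : ℝ := if 0 ≤ t then 1/2 else 1

noncomputable def Wf (n : ℕ) (t : ℝ) : ℝ := ∏ j ∈ range n, vf (t - j)

noncomputable def Ef (n : ℕ) (t : ℝ) : ℝ := ∏ j ∈ range n, ef (t - j)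

lemma one_le_cf (t : ℝ) : 1 ≤ cf t := by
  unfold cf
  split_ifs with h
  · exact le_rfl
  · push_neg at h
    have h0 : 0 < -t := by linarith
    have h1 : 1 ≤ ⌈-t⌉₊ := Nat.one_le_iff_ne_zero.mpr (Nat.ceil_pos.mpr h0).ne'
    exact_mod_cast h1

lemma cf_of_nonneg {t : ℝ} (h : 0 ≤ t) : cf t = 1 := by unfold cf; rw [if_pos h]

lemma cf_pos (t : ℝ) : 0 < cf t := lt_of_lt_of_le one_pos (one_le_cf t)

lemma cf_of_neg {t : ℝ} (h : t < 0) : cf t = (⌈-t⌉₊ : ℝ) := by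
  unfold cf; rw [if_neg (not_le.mpr h)]

lemma cf_sub_one_of_nonneg {t : ℝ} (h : 0 ≤ t) : cf (t - 1) = 1 := by
  unfold cf
  split_ifs with h1
  · rfl
  · push_neg at h1
    have h2 : -(t-1) ≤ 1 := by linarith
    have h3 : 0 < -(t-1) := by linarith
    have : ⌈-(t-1)⌉₊ = 1 := by
      refine le_antisymm (Nat.ceil_le.mpr (by exact_mod_cast h2)) ?_
      exact Nat.one_le_iff_ne_zero.mpr (by positivity)
    rw [this]; norm_num

lemma cf_sub_one_of_neg {t : ℝ} (h : t < 0) : cf (t - 1) = cf t + 1 := by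
  rw [cf_of_neg (by linarith), cf_of_neg h]
  have : -(t-1) = -t + 1 := by ring
  rw [this, Nat.ceil_add_one (by linarith)]
  push_cast; ring

lemma vf_eq (t : ℝ) : vf t = ef t * (cf (t - 1) / cf t) := by
  unfold vf ef
  split_ifs with h
  · rw [cf_sub_one_of_nonneg h]
    have : cf t = 1 := by unfold cf; rw [if_pos h]
    rw [this]; norm_num
  · push_neg at h
    rw [cf_sub_one_of_neg h, one_mul]

lemma vf_pos (t : ℝ) : 0 < vf t := by
  unfold vf
  split_ifs with h
  · norm_num
  · have := cf_pos t
    positivity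

lemma ef_pos (t : ℝ) : 0 < ef t := by unfold ef; split_ifs <;> norm_num

lemma ef_le_one (t : ℝ) : ef t ≤ 1 := by unfold ef; split_ifs <;> norm_num

lemma half_le_ef (t : ℝ) : 1/2 ≤ ef t := by unfold ef; split_ifs <;> norm_num

lemma ef_of_neg {t : ℝ} (h : t < 0) : ef t = 1 := by unfold ef; rw [if_neg (not_le.mpr h)]

lemma ef_of_nonneg {t : ℝ} (h : 0 ≤ t) : ef t = 1/2 := by unfold ef; rw [if_pos h]

lemma Ef_pos (n : ℕ) (t : ℝ) : 0 < Ef n t := Finset.prod_pos fun j _ => ef_pos _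

lemma Ef_le_one (n : ℕ) (t : ℝ) : Ef n t ≤ 1 :=
  Finset.prod_le_one (fun j _ => (ef_pos _).le) (fun j _ => ef_le_one _)

lemma Wf_pos (n : ℕ) (t : ℝ) : 0 < Wf n t := Finset.prod_pos fun j _ => vf_pos _

lemma Wf_succ (n : ℕ) (t : ℝ) : Wf (n+1) t = Wf n t * vf (t - n) := by
  unfold Wf; rw [Finset.prod_range_succ]

/-- telescoping identity -/
lemma Wf_eq (n : ℕ) (t : ℝ) : Wf n t = Ef n t * (cf (t - n) / cf t) := by
  induction n with
  | zero =>
    simp [Wf, Ef, div_self (cf_pos t).ne']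
  | succ n ih =>
    rw [Wf_succ, ih, vf_eq (t - n)]
    unfold Ef
    rw [Finset.prod_range_succ]
    have hc : cf (t - n) ≠ 0 := (cf_pos _).ne'
    have harg : t - ↑n - 1 = t - ↑(n+1) := by push_cast; ring
    rw [← harg]
    field_simp [hc, (cf_pos t).ne']

lemma cf_sub_nat_le (t : ℝ) (n : ℕ) : cf (t - n) ≤ cf t + n := by
  by_cases h : 0 ≤ t - n
  · rw [cf_of_nonneg h]
    have h1 := one_le_cf t
    have h2 : (0:ℝ) ≤ n := Nat.cast_nonneg n
    linarith
  · push_neg at h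
    rw [cf_of_neg h]
    by_cases ht : 0 ≤ t
    · have : -(t - n) ≤ (n : ℝ) := by linarith
      have h2 : ⌈-(t-n)⌉₊ ≤ n := Nat.ceil_le.mpr (by exact_mod_cast this)
      rw [cf_of_nonneg ht]
      calc ((⌈-(t-n)⌉₊ : ℕ) : ℝ) ≤ (n : ℝ) := by exact_mod_cast h2
        _ ≤ 1 + n := by linarith
    · push_neg at ht
      have harg : -(t - n) = -t + n := by ring
      rw [harg, Nat.ceil_add_natCast (by linarith) n, cf_of_neg ht]
      exact le_of_eq (by push_cast; ring)

lemma Wf_le (n : ℕ) (t : ℝ) : Wf n t ≤ n + 1 := by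
  rw [Wf_eq]
  have hct := cf_pos t
  have h1 : cf (t - n) / cf t ≤ (cf t + n) / cf t :=
    (div_le_div_iff_of_pos_right hct).mpr (cf_sub_nat_le t n)
  have h2 : (cf t + n) / cf t = 1 + n / cf t := by field_simp
  have h3 : (n : ℝ) / cf t ≤ n := by
    rw [div_le_iff₀ hct]
    nlinarith [one_le_cf t, Nat.cast_nonneg (α := ℝ) n]
  calc Ef n t * (cf (t - n) / cf t) ≤ 1 * ((cf t + n) / cf t) := by
        apply mul_le_mul (Ef_le_one n t) h1 (div_nonneg (cf_pos _).le (cf_pos _).le) one_pos.le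
    _ = 1 + n / cf t := by rw [one_mul, h2]
    _ ≤ (n:ℝ) + 1 := by linarith

lemma cf_le_nat {R : ℕ} (hR : 1 ≤ R) {s : ℝ} (hs : -(R:ℝ) ≤ s) : cf s ≤ R := by
  by_cases h : 0 ≤ s
  · rw [cf_of_nonneg h]; exact_mod_cast hR
  · push_neg at h
    rw [cf_of_neg h]
    have : -s ≤ (R:ℝ) := by linarith
    exact_mod_cast Nat.ceil_le.mpr this

/-- Upper bound on the weight product over an orbit segment ending in `[-R, R]`. -/
lemma Wf_shift_le {R : ℕ} (hR : 1 ≤ R) {s : ℝ} (hs : -(R:ℝ) ≤ s) {n : ℕ} (hn : R ≤ n) :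
    Wf n (s + n) ≤ (R:ℝ) * (1/2)^(n - R) := by
  rw [Wf_eq]
  have harg : s + (n:ℝ) - (n:ℝ) = s := by ring
  rw [harg]
  set f : ℕ → ℝ := fun j => ef (s + n - j) with hf
  have hEf : Ef n (s + n) ≤ (1/2)^(n - R) := by
    have hnR : (n - R) + R = n := Nat.sub_add_cancel hn
    have hsplit : Ef n (s + n) = (∏ j ∈ range (n - R), f j) * ∏ j ∈ range R, f ((n - R) + j) := by
      rw [← Finset.prod_range_add, hnR]; rfl
    rw [hsplit]
    have hcast : ((n - R : ℕ) : ℝ) = (n:ℝ) - R := Nat.cast_sub hn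
    have h1 : (∏ j ∈ range (n - R), f j) = ∏ _j ∈ range (n - R), (1/2 : ℝ) := by
      apply Finset.prod_congr rfl
      intro j hj
      have hj' : (j:ℝ) < ((n - R : ℕ) : ℝ) := by exact_mod_cast Finset.mem_range.mp hj
      rw [hcast] at hj'
      exact ef_of_nonneg (by linarith)
    have h2 : (∏ j ∈ range R, f ((n - R) + j)) ≤ 1 :=
      Finset.prod_le_one (fun j _ => (ef_pos _).le) (fun j _ => ef_le_one _)
    calc (∏ j ∈ range (n - R), f j) * ∏ j ∈ range R, f ((n - R) + j)
        ≤ (∏ j ∈ range (n - R), f j) * 1 :=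
          mul_le_mul_of_nonneg_left h2 (Finset.prod_nonneg fun j _ => (ef_pos _).le)
      _ = (1/2)^(n - R) := by
          rw [mul_one, h1, Finset.prod_const, Finset.card_range]
  have hcf : cf s / cf (s + n) ≤ (R:ℝ) := by
    calc cf s / cf (s + n) ≤ cf s / 1 :=
          div_le_div_of_nonneg_left (cf_pos s).le one_pos (one_le_cf _)
      _ = cf s := div_one _
      _ ≤ R := cf_le_nat hR hs
  calc Ef n (s + n) * (cf s / cf (s + n)) ≤ (1/2)^(n - R) * R := by
        apply mul_le_mul hEf hcf (div_nonneg (cf_pos _).le (cf_pos _).le) (by positivity)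
    _ = (R:ℝ) * (1/2)^(n - R) := mul_comm _ _

/-- Lower bound on the weight product at points of `[-R, R]`. -/
lemma le_Wf {R : ℕ} (hR : 1 ≤ R) {t : ℝ} (ht1 : -(R:ℝ) ≤ t) (ht2 : t ≤ R)
    {n : ℕ} (hn : 2*R + 1 ≤ n) :
    ((n:ℝ) - R) / ((R:ℝ) * 2^(R+1)) ≤ Wf n t := by
  have hnR : (R:ℝ) < n := by exact_mod_cast (by omega : R < n)
  rw [Wf_eq]
  set f : ℕ → ℝ := fun j => ef (t - j) with hf
  have hEf : (1/2 : ℝ)^(R+1) ≤ Ef n t := by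
    have hsplit0 : (R + 1) + (n - (R+1)) = n := by omega
    have hsplit : Ef n t = (∏ j ∈ range (R+1), f j) * ∏ j ∈ range (n - (R+1)), f ((R+1) + j) := by
      rw [← Finset.prod_range_add, hsplit0]; rfl
    rw [hsplit]
    have h2 : (∏ j ∈ range (n - (R+1)), f ((R+1) + j)) = 1 := by
      apply Finset.prod_eq_one
      intro j _
      apply ef_of_neg
      have hc : ((R + 1 + j : ℕ) : ℝ) = (R:ℝ) + 1 + j := by push_cast; ring
      show t - ((R + 1 + j : ℕ) : ℝ) < 0
      rw [hc]
      linarith [Nat.cast_nonneg (α := ℝ) j]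
    rw [h2, mul_one]
    calc (1/2 : ℝ)^(R+1) = ∏ _j ∈ range (R+1), (1/2 : ℝ) := by
          rw [Finset.prod_const, Finset.card_range]
      _ ≤ ∏ j ∈ range (R+1), f j :=
          Finset.prod_le_prod (fun j _ => by norm_num) (fun j _ => half_le_ef _)
  have hcfn : ((n:ℝ) - R) ≤ cf (t - n) := by
    have htn : t - n < 0 := by linarith
    rw [cf_of_neg htn]
    calc (n:ℝ) - R ≤ -(t - n) := by linarith
      _ ≤ ⌈-(t - n)⌉₊ := Nat.le_ceil _
  have hcft : cf t ≤ (R:ℝ) := cf_le_nat hR ht1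
  have hfrac : ((n:ℝ) - R) / (R:ℝ) ≤ cf (t - n) / cf t :=
    div_le_div₀ (cf_pos _).le hcfn (cf_pos t) hcft
  have hRpos : (0:ℝ) < R := by exact_mod_cast hR
  calc ((n:ℝ) - R) / ((R:ℝ) * 2^(R+1))
      = (1/2:ℝ)^(R+1) * (((n:ℝ) - R) / R) := by
        have h1 : ((R:ℝ)) ≠ 0 := hRpos.ne'
        have h2 : ((2:ℝ)^(R+1)) ≠ 0 := by positivity
        rw [div_pow, one_pow]
        field_simp
    _ ≤ Ef n t * (cf (t - n) / cf t) :=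
        mul_le_mul hEf hfrac (div_nonneg (by linarith) hRpos.le) (Ef_pos n t).le

lemma measurable_cf : Measurable cf := by
  unfold cf
  apply Measurable.ite (measurableSet_le measurable_const measurable_id) measurable_const
  exact measurable_from_top.comp (Nat.measurable_ceil.comp measurable_neg)

lemma measurable_vf : Measurable vf := by
  unfold vf
  apply Measurable.ite (measurableSet_le measurable_const measurable_id) measurable_const
  exact (measurable_cf.add measurable_const).div measurable_cf

lemma measurable_Wf (n : ℕ) : Measurable (Wf n) :=
  Finset.measurable_prod _ fun j _ => measurable_vf.comp (measurable_id.sub measurable_const)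


lemma key_norm_le {φ ψ : ℝ → ℂ} (hψ : AEStronglyMeasurable ψ (volume : Measure ℝ)) (a C : ℝ)
    (hC : 0 ≤ C)
    (hb : ∀ᵐ t ∂(volume : Measure ℝ), ‖φ t‖ ≤ C * ‖ψ (t + a)‖) :
    eLpNorm φ 2 volume ≤ ENNReal.ofReal C * eLpNorm ψ 2 volume := by
  have h1 : eLpNorm φ 2 volume ≤ eLpNorm (fun t => C * ‖ψ (t + a)‖) 2 volume := by
    apply eLpNorm_mono_ae
    filter_upwards [hb] with t ht
    rwa [Real.norm_eq_abs, abs_of_nonneg (mul_nonneg hC (norm_nonneg _))]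
  have h2 : eLpNorm (fun t => C * ‖ψ (t + a)‖) 2 volume
      = ‖C‖ₑ * eLpNorm (fun t => ψ (t + a)) 2 volume := by
    rw [show (fun t => C * ‖ψ (t + a)‖) = C • (fun t => ‖ψ (t + a)‖) from rfl,
      eLpNorm_const_smul, eLpNorm_norm]
  have h3 : eLpNorm (fun t => ψ (t + a)) 2 volume = eLpNorm ψ 2 volume :=
    eLpNorm_comp_measurePreserving hψ (measurePreserving_add_right volume a)
  rw [h2, h3, Real.enorm_eq_ofReal hC] at h1
  exact h1

end CesaroAux

/-- A bounded linear operator `T` on a complex normed space is *topologically Cesàro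
hyper-transitive* if for every pair of nonempty open subsets `O₁, O₂` there exists a
strictly increasing sequence `(n_k)` of (positive) natural numbers such that
`n_k⁻¹ • T^{n_k}(O₁) ∩ O₂ ≠ ∅` for all `k`. -/
def IsCesaroHyperTransitive {E : Type*} [NormedAddCommGroup E] [NormedSpace ℂ E]
    (T : E →L[ℂ] E) : Prop :=
  ∀ O₁ O₂ : Set E, IsOpen O₁ → IsOpen O₂ → O₁.Nonempty → O₂.Nonempty →
    ∃ n : ℕ → ℕ, StrictMono n ∧ (∀ k, 1 ≤ n k) ∧
      ∀ k, ∃ f ∈ O₁, ((n k : ℂ))⁻¹ • (T ^ n k) f ∈ O₂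

/-- A bounded linear operator `T` is *hypercyclic* if its set of hypercyclic vectors
(vectors with dense orbit) is dense. -/
def IsHypercyclic {E : Type*} [NormedAddCommGroup E] [NormedSpace ℂ E]
    (T : E →L[ℂ] E) : Prop :=
  Dense {f : E | Dense {y : E | ∃ n : ℕ, 1 ≤ n ∧ y = (T ^ n) f}}

open CesaroAux Metric

set_option maxHeartbeats 1000000

theorem hypercyclic_not_cesaro_on_L2
    (w : ℝ → ℝ)
    (hw_nonneg : ∀ t : ℝ, 0 ≤ t → w t = 1 / 2)
    (hw_neg : ∀ m : ℕ, 1 ≤ m → ∀ t : ℝ, -(m : ℝ) ≤ t → t < -(m : ℝ) + 1 →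
      w t = ((m : ℝ) + 1) / (m : ℝ))
    (T : Lp ℂ 2 (volume : Measure ℝ) →L[ℂ] Lp ℂ 2 (volume : Measure ℝ))
    (hT : ∀ f : Lp ℂ 2 (volume : Measure ℝ),
      (T f : ℝ → ℂ) =ᵐ[volume] fun t => (w t : ℂ) * f (t - 1)) :
    IsHypercyclic T ∧ ¬ IsCesaroHyperTransitive T := by

  classical
  have hwv : ∀ t, w t = vf t := by
    intro t
    by_cases h : 0 ≤ t
    · rw [hw_nonneg t h]; unfold vf; rw [if_pos h]
    · push_neg at h
      set m := ⌈-t⌉₊ with hm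
      have hm1 : 1 ≤ m := Nat.ceil_pos.mpr (by linarith)
      have h1 : -(m:ℝ) ≤ t := by
        have := Nat.le_ceil (-t)
        rw [← hm] at this
        linarith
      have h2 : t < -(m:ℝ) + 1 := by
        have := Nat.ceil_lt_add_one (by linarith : (0:ℝ) ≤ -t)
        rw [← hm] at this
        linarith
      rw [hw_neg m hm1 t h1 h2]
      unfold vf
      rw [if_neg (not_le.mpr h), cf_of_neg h, ← hm]
  have hT' : ∀ f : Lp ℂ 2 (volume : Measure ℝ),
      (T f : ℝ → ℂ) =ᵐ[volume] fun t => (vf t : ℂ) * f (t - 1) := by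
    intro f
    simpa only [hwv] using hT f
  -- the iterate formula
  have hTn : ∀ (n : ℕ) (f : Lp ℂ 2 (volume : Measure ℝ)),
      ((T ^ n) f : ℝ → ℂ) =ᵐ[volume] fun t => ((Wf n t : ℝ) : ℂ) * f (t - (n:ℝ)) := by
    intro n
    induction n with
    | zero =>
      intro f
      simp only [pow_zero, ContinuousLinearMap.one_apply, Wf, Finset.range_zero,
        Finset.prod_empty, Complex.ofReal_one, one_mul, Nat.cast_zero, sub_zero]
      exact Filter.Eventually.of_forall fun t => rfl
    | succ n ih =>
      intro f
      have h1 : ((T ^ (n+1)) f : ℝ → ℂ) = ((T ^ n) (T f) : ℝ → ℂ) := by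
        rw [pow_succ, ContinuousLinearMap.mul_apply]
      rw [h1]
      refine (ih (T f)).trans ?_
      have h2 : ((T f : ℝ → ℂ) ∘ (fun t => t - (n:ℝ))) =ᵐ[volume]
          ((fun s => (vf s : ℂ) * f (s - 1)) ∘ (fun t => t - (n:ℝ))) :=
        (measurePreserving_sub_right volume (n:ℝ)).quasiMeasurePreserving.ae_eq_comp (hT' f)
      have h2' : (fun t => (T f : ℝ → ℂ) (t - (n:ℝ))) =ᵐ[volume]
          (fun t => (vf (t - (n:ℝ)) : ℂ) * f (t - (n:ℝ) - 1)) := h2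
      filter_upwards [h2'] with t ht
      show ((Wf n t : ℝ) : ℂ) * (T f : ℝ → ℂ) (t - (n:ℝ))
          = ((Wf (n+1) t : ℝ) : ℂ) * f (t - ((n+1 : ℕ):ℝ))
      rw [ht]
      have harg : t - (n:ℝ) - 1 = t - ((n+1 : ℕ):ℝ) := by push_cast; ring
      have hW : ((Wf (n+1) t : ℝ) : ℂ) = ((Wf n t : ℝ) : ℂ) * ((vf (t - (n:ℝ)) : ℝ) : ℂ) := by
        rw [Wf_succ]; push_cast; ring
      rw [← harg, hW]
      ring
  -- basic norm estimate
  have normTn : ∀ (n : ℕ) (f : Lp ℂ 2 (volume : Measure ℝ)) (C : ℝ), 0 ≤ C →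
      (∀ᵐ t ∂(volume : Measure ℝ),
        ‖((Wf n t : ℝ) : ℂ) * (f : ℝ → ℂ) (t - (n:ℝ))‖ ≤ C * ‖(f : ℝ → ℂ) (t - (n:ℝ))‖) →
      ‖(T ^ n) f‖ ≤ C * ‖f‖ := by
    intro n f C hC hb
    rw [Lp.norm_def, Lp.norm_def, eLpNorm_congr_ae (hTn n f)]
    have hkey := key_norm_le (φ := fun t => ((Wf n t : ℝ) : ℂ) * (f : ℝ → ℂ) (t - (n:ℝ)))
      (Lp.aestronglyMeasurable f) (-(n:ℝ)) C hC (by simpa only [← sub_eq_add_neg] using hb)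
    calc (eLpNorm (fun t => ((Wf n t : ℝ) : ℂ) * (f : ℝ → ℂ) (t - (n:ℝ))) 2 volume).toReal
        ≤ (ENNReal.ofReal C * eLpNorm (f : ℝ → ℂ) 2 volume).toReal :=
          ENNReal.toReal_mono (ENNReal.mul_ne_top ENNReal.ofReal_ne_top (Lp.eLpNorm_ne_top f)) hkey
      _ = C * (eLpNorm (f : ℝ → ℂ) 2 volume).toReal := by
          rw [ENNReal.toReal_mul, ENNReal.toReal_ofReal hC]
  -- polynomial growth of iterates
  have normTle : ∀ (n : ℕ) (f : Lp ℂ 2 (volume : Measure ℝ)), ‖(T ^ n) f‖ ≤ ((n:ℝ) + 1) * ‖f‖ := by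
    intro n f
    apply normTn n f _ (by positivity)
    refine Filter.Eventually.of_forall fun t => ?_
    rw [norm_mul, Complex.norm_real, Real.norm_eq_abs, abs_of_pos (Wf_pos n t)]
    exact mul_le_mul_of_nonneg_right (Wf_le n t) (norm_nonneg _)
  -- PART 2 : not topologically Cesàro hyper-transitive
  have hnc : ¬ IsCesaroHyperTransitive T := by
    intro hc
    set h₀ : Lp ℂ 2 (volume : Measure ℝ) :=
      indicatorConstLp 2 measurableSet_Icc (by simp : volume (Set.Icc (0:ℝ) 1) ≠ ⊤) (1:ℂ) with hh₀
    have hh₀norm : ‖h₀‖ = 1 := by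
      rw [hh₀, norm_indicatorConstLp (by norm_num) (by norm_num)]
      simp [Real.volume_Icc]
    set g : Lp ℂ 2 (volume : Measure ℝ) := (10:ℂ) • h₀ with hg
    have hgnorm : ‖g‖ = 10 := by
      rw [hg, norm_smul, hh₀norm]
      simp
    obtain ⟨n, _, hpos, hK⟩ := hc (ball 0 1) (ball g 1) isOpen_ball isOpen_ball
      ⟨0, by simp⟩ ⟨g, by simp⟩
    obtain ⟨f, hf1, hf2⟩ := hK 0
    have hn1 : (1:ℝ) ≤ (n 0 : ℝ) := by exact_mod_cast hpos 0
    have hb1 : ‖f‖ < 1 := by rwa [mem_ball, dist_zero_right] at hf1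
    have hTb : ‖(T ^ n 0) f‖ ≤ ((n 0 : ℝ) + 1) * ‖f‖ := normTle _ _
    have hsm : ‖((n 0 : ℂ))⁻¹ • (T ^ n 0) f‖ = ((n 0 : ℝ))⁻¹ * ‖(T ^ n 0) f‖ := by
      rw [norm_smul, norm_inv, Complex.norm_natCast]
    have hle2 : ‖((n 0 : ℂ))⁻¹ • (T ^ n 0) f‖ ≤ 2 := by
      rw [hsm]
      have hnpos : (0:ℝ) < (n 0 : ℝ) := by linarith
      have h1 : ((n 0 : ℝ))⁻¹ * ‖(T ^ n 0) f‖ ≤ ((n 0 : ℝ))⁻¹ * (((n 0 : ℝ) + 1) * ‖f‖) :=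
        mul_le_mul_of_nonneg_left hTb (by positivity)
      have h2 : ((n 0 : ℝ))⁻¹ * (((n 0 : ℝ) + 1) * ‖f‖) ≤ 2 := by
        rw [inv_mul_le_iff₀ hnpos]
        nlinarith [norm_nonneg f]
      linarith
    have h9 : (9:ℝ) ≤ ‖((n 0 : ℂ))⁻¹ • (T ^ n 0) f‖ := by
      have hd : ‖((n 0 : ℂ))⁻¹ • (T ^ n 0) f - g‖ < 1 := by
        rwa [mem_ball, dist_eq_norm] at hf2
      have habs := abs_norm_sub_norm_le (((n 0 : ℂ))⁻¹ • (T ^ n 0) f) g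
      rw [hgnorm] at habs
      have hneg := neg_abs_le (‖((n 0 : ℂ))⁻¹ • (T ^ n 0) f‖ - 10)
      linarith
    linarith
  -- topological transitivity
  have htrans : ∀ U V : Set (Lp ℂ 2 (volume : Measure ℝ)), IsOpen U → IsOpen V →
      U.Nonempty → V.Nonempty → ∃ f ∈ U, ∃ n : ℕ, 1 ≤ n ∧ (T ^ n) f ∈ V := by
    intro U V hU hV hUne hVne
    obtain ⟨g, hgU⟩ := hUne
    obtain ⟨h, hhV⟩ := hVne
    obtain ⟨ε, hε, hballU⟩ := Metric.isOpen_iff.mp hU g hgU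
    obtain ⟨δ, hδ, hballV⟩ := Metric.isOpen_iff.mp hV h hhV
    obtain ⟨g', hg'supp, hg'close, hg'cont, hg'mem⟩ :=
      (Lp.memLp g).exists_hasCompactSupport_eLpNorm_sub_le (by norm_num : (2:ℝ≥0∞) ≠ ∞)
        (show ENNReal.ofReal (ε/2) ≠ 0 from (ENNReal.ofReal_pos.mpr (by linarith)).ne')
    obtain ⟨h', hh'supp, hh'close, hh'cont, hh'mem⟩ :=
      (Lp.memLp h).exists_hasCompactSupport_eLpNorm_sub_le (by norm_num : (2:ℝ≥0∞) ≠ ∞)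
        (show ENNReal.ofReal (δ/2) ≠ 0 from (ENNReal.ofReal_pos.mpr (by linarith)).ne')
    set G : Lp ℂ 2 (volume : Measure ℝ) := hg'mem.toLp g' with hGdef
    set H : Lp ℂ 2 (volume : Measure ℝ) := hh'mem.toLp h' with hHdef
    have hGg : ‖G - g‖ ≤ ε/2 := by
      rw [Lp.norm_def]
      apply ENNReal.toReal_le_of_le_ofReal (by linarith)
      have hae : ((G - g : Lp ℂ 2 (volume : Measure ℝ)) : ℝ → ℂ) =ᵐ[volume]
          g' - (g : ℝ → ℂ) := by
        filter_upwards [Lp.coeFn_sub G g, hg'mem.coeFn_toLp] with t h1 h2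
        rw [h1]
        show (G : ℝ → ℂ) t - (g : ℝ → ℂ) t = g' t - (g : ℝ → ℂ) t
        rw [h2]
      rw [eLpNorm_congr_ae hae, eLpNorm_sub_comm]
      exact hg'close
    have hHh : ‖H - h‖ ≤ δ/2 := by
      rw [Lp.norm_def]
      apply ENNReal.toReal_le_of_le_ofReal (by linarith)
      have hae : ((H - h : Lp ℂ 2 (volume : Measure ℝ)) : ℝ → ℂ) =ᵐ[volume]
          h' - (h : ℝ → ℂ) := by
        filter_upwards [Lp.coeFn_sub H h, hh'mem.coeFn_toLp] with t h1 h2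
        rw [h1]
        show (H : ℝ → ℂ) t - (h : ℝ → ℂ) t = h' t - (h : ℝ → ℂ) t
        rw [h2]
      rw [eLpNorm_congr_ae hae, eLpNorm_sub_comm]
      exact hh'close
    -- support radius
    obtain ⟨r, hr⟩ := (hg'supp.isBounded.union hh'supp.isBounded).subset_closedBall 0
    obtain ⟨R, hR1, hrR⟩ : ∃ R : ℕ, 1 ≤ R ∧ r ≤ (R:ℝ) := by
      refine ⟨⌈r⌉₊ + 1, Nat.le_add_left 1 _, ?_⟩
      have h1 := Nat.le_ceil r
      have h2 : ((⌈r⌉₊ : ℕ):ℝ) ≤ ((⌈r⌉₊ + 1 : ℕ):ℝ) := by exact_mod_cast Nat.le_succ _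
      push_cast at h2 ⊢
      linarith
    have hsupp : ∀ s : ℝ, s ∉ Set.Icc (-(R:ℝ)) (R:ℝ) → g' s = 0 ∧ h' s = 0 := by
      intro s hs
      have hsub : tsupport g' ∪ tsupport h' ⊆ Set.Icc (-(R:ℝ)) (R:ℝ) := by
        intro x hx
        have h1 : x ∈ closedBall (0:ℝ) r := hr hx
        rw [Real.closedBall_eq_Icc] at h1
        constructor
        · have := h1.1; linarith
        · have := h1.2; linarith
      constructor <;> apply image_eq_zero_of_notMem_tsupport <;> intro hmem <;> apply hs
      · exact hsub (Set.mem_union_left _ hmem)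
      · exact hsub (Set.mem_union_right _ hmem)
    -- choose n
    have hevC : ∀ᶠ n : ℕ in Filter.atTop,
        (R:ℝ) * (1/2)^(n - R) * (‖G‖ + 1) < δ/2 := by
      have t1 : Filter.Tendsto (fun k : ℕ => (R:ℝ) * (1/2 : ℝ)^k * (‖G‖ + 1))
          Filter.atTop (nhds 0) := by
        have h0 := (tendsto_pow_atTop_nhds_zero_of_lt_one (by norm_num : (0:ℝ) ≤ 1/2)
          (by norm_num : (1/2:ℝ) < 1)).const_mul (R:ℝ)
        simpa using h0.mul_const (‖G‖ + 1)
      exact (t1.comp (tendsto_sub_atTop_nat R)).eventually_lt_const (by positivity)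
    have hevD : ∀ᶠ n : ℕ in Filter.atTop,
        (R:ℝ) * 2^(R+1) / ((n:ℝ) - R) * (‖H‖ + 1) < ε/2 := by
      have t2 : Filter.Tendsto (fun n : ℕ => ((n:ℝ) - R)) Filter.atTop Filter.atTop :=
        (Filter.tendsto_atTop_add_const_right _ (-(R:ℝ)) tendsto_natCast_atTop_atTop).congr
          (fun n => by ring)
      have t3 : Filter.Tendsto (fun n : ℕ => (R:ℝ) * 2^(R+1) / ((n:ℝ) - R) * (‖H‖ + 1))
          Filter.atTop (nhds 0) := by
        have h0 := (t2.inv_tendsto_atTop.const_mul ((R:ℝ) * 2^(R+1))).mul_const (‖H‖ + 1)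
        simpa [div_eq_mul_inv] using h0
      exact t3.eventually_lt_const (by positivity)
    obtain ⟨n, hn2R, hnC, hnD⟩ :=
      ((Filter.eventually_ge_atTop (2*R+1)).and (hevC.and hevD)).exists
    have hRn : R ≤ n := by omega
    have hn1 : 1 ≤ n := by omega
    have hRpos : (0:ℝ) < (R:ℝ) := by exact_mod_cast hR1
    have hnRpos : (0:ℝ) < (n:ℝ) - R := by
      have h1 : ((2*R+1 : ℕ):ℝ) ≤ (n:ℝ) := by exact_mod_cast hn2R
      have h2 : ((2*R+1 : ℕ):ℝ) = 2*(R:ℝ)+1 := by push_cast; ring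
      rw [h2] at h1
      linarith
    set Cn : ℝ := (R:ℝ) * (1/2)^(n - R) with hCn
    set Dn : ℝ := (R:ℝ) * 2^(R+1) / ((n:ℝ) - R) with hDn
    have hCn0 : (0:ℝ) ≤ Cn := by rw [hCn]; positivity
    have hDn0 : (0:ℝ) ≤ Dn := by
      rw [hDn]; exact div_nonneg (by positivity) hnRpos.le
    -- the backward-orbit correction term
    set u : ℝ → ℂ := fun s => (((Wf n (s + (n:ℝ)) : ℝ) : ℂ))⁻¹ * h' (s + (n:ℝ)) with hu
    have humeas : AEStronglyMeasurable u volume := by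
      apply Measurable.aestronglyMeasurable
      rw [hu]
      exact ((Complex.measurable_ofReal.comp ((measurable_Wf n).comp
        (measurable_id.add_const (n:ℝ)))).inv).mul
        (hh'cont.measurable.comp (measurable_id.add_const (n:ℝ)))
    have hub : ∀ s : ℝ, ‖u s‖ ≤ Dn * ‖h' (s + (n:ℝ))‖ := by
      intro s
      by_cases hz : h' (s + (n:ℝ)) = 0
      · simp [hu, hz]
      · have hmem : s + (n:ℝ) ∈ Set.Icc (-(R:ℝ)) (R:ℝ) := by
          by_contra hcon
          exact hz ((hsupp _ hcon).2)
        have hWlow := le_Wf hR1 hmem.1 hmem.2 hn2R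
        have hLpos : (0:ℝ) < ((n:ℝ) - R) / ((R:ℝ) * 2^(R+1)) :=
          div_pos hnRpos (by positivity)
        have hWpos : (0:ℝ) < Wf n (s + (n:ℝ)) := Wf_pos _ _
        rw [hu]
        show ‖(((Wf n (s + (n:ℝ)) : ℝ):ℂ))⁻¹ * h' (s + (n:ℝ))‖ ≤ _
        rw [norm_mul, norm_inv, Complex.norm_real, Real.norm_eq_abs, abs_of_pos hWpos]
        apply mul_le_mul_of_nonneg_right _ (norm_nonneg _)
        have hinv : (Wf n (s + (n:ℝ)))⁻¹ ≤ (((n:ℝ) - R) / ((R:ℝ) * 2^(R+1)))⁻¹ :=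
          inv_anti₀ hLpos hWlow
        rw [inv_div] at hinv
        rw [hDn]
        exact hinv
    have humem : MemLp u 2 volume :=
      MemLp.of_le_mul
        (hh'mem.comp_measurePreserving (measurePreserving_add_right volume (n:ℝ)))
        humeas (Filter.Eventually.of_forall hub)
    set Uu : Lp ℂ 2 (volume : Measure ℝ) := humem.toLp u with hUudef
    have hHnorm : ‖H‖ = (eLpNorm h' 2 volume).toReal := by
      rw [Lp.norm_def]
      exact congrArg ENNReal.toReal (eLpNorm_congr_ae hh'mem.coeFn_toLp)
    have hUunorm : ‖Uu‖ ≤ Dn * (‖H‖ + 1) := by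
      rw [Lp.norm_def, eLpNorm_congr_ae humem.coeFn_toLp]
      apply ENNReal.toReal_le_of_le_ofReal (mul_nonneg hDn0 (by positivity))
      have hk := key_norm_le (hh'mem.aestronglyMeasurable) (n:ℝ) Dn hDn0
        (Filter.Eventually.of_forall hub)
      refine le_trans hk ?_
      have heq : eLpNorm h' 2 volume = ENNReal.ofReal ‖H‖ := by
        rw [hHnorm, ENNReal.ofReal_toReal hh'mem.eLpNorm_ne_top]
      rw [heq, ← ENNReal.ofReal_mul hDn0]
      exact ENNReal.ofReal_le_ofReal (by nlinarith [norm_nonneg H])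
    -- T^n G is small
    have hTG : ‖(T ^ n) G‖ ≤ Cn * (‖G‖ + 1) := by
      have hb : ∀ᵐ t ∂(volume : Measure ℝ),
          ‖((Wf n t : ℝ):ℂ) * (G : ℝ → ℂ) (t - (n:ℝ))‖ ≤ Cn * ‖(G : ℝ → ℂ) (t - (n:ℝ))‖ := by
        have hsh : (fun t : ℝ => (G : ℝ → ℂ) (t - (n:ℝ))) =ᵐ[volume]
            (fun t => g' (t - (n:ℝ))) :=
          (measurePreserving_sub_right volume (n:ℝ)).quasiMeasurePreserving.ae_eq_comp
            (hg'mem.coeFn_toLp)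
        filter_upwards [hsh] with t ht
        rw [ht]
        by_cases hz : g' (t - (n:ℝ)) = 0
        · simp [hz, hCn0]
        · have hmem : t - (n:ℝ) ∈ Set.Icc (-(R:ℝ)) (R:ℝ) := by
            by_contra hcon
            exact hz ((hsupp _ hcon).1)
          have hWle := Wf_shift_le hR1 hmem.1 hRn
          have harg : t - (n:ℝ) + (n:ℝ) = t := by ring
          rw [harg] at hWle
          rw [norm_mul, Complex.norm_real, Real.norm_eq_abs, abs_of_pos (Wf_pos n t), hCn]
          exact mul_le_mul_of_nonneg_right hWle (norm_nonneg _)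
      calc ‖(T ^ n) G‖ ≤ Cn * ‖G‖ := normTn n G Cn hCn0 hb
        _ ≤ Cn * (‖G‖ + 1) := by nlinarith [norm_nonneg G]
    -- T^n Uu = H exactly
    have hTU : (T ^ n) Uu = H := by
      apply Lp.ext
      refine (hTn n Uu).trans ?_
      refine Filter.EventuallyEq.trans ?_ hh'mem.coeFn_toLp.symm
      have hsh : (fun t : ℝ => (Uu : ℝ → ℂ) (t - (n:ℝ))) =ᵐ[volume]
          (fun t => u (t - (n:ℝ))) :=
        (measurePreserving_sub_right volume (n:ℝ)).quasiMeasurePreserving.ae_eq_comp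
          (humem.coeFn_toLp)
      filter_upwards [hsh] with t ht
      show ((Wf n t : ℝ):ℂ) * (Uu : ℝ → ℂ) (t - (n:ℝ)) = h' t
      rw [ht]
      simp only [hu]
      have harg : t - (n:ℝ) + (n:ℝ) = t := by ring
      rw [harg, ← mul_assoc, mul_inv_cancel₀ (Complex.ofReal_ne_zero.mpr (Wf_pos n t).ne'),
        one_mul]
    -- conclude
    refine ⟨G + Uu, ?_, n, hn1, ?_⟩
    · apply hballU
      rw [mem_ball, dist_eq_norm]
      have hre : G + Uu - g = (G - g) + Uu := by abel
      rw [hre]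
      calc ‖(G - g) + Uu‖ ≤ ‖G - g‖ + ‖Uu‖ := norm_add_le _ _
        _ < ε/2 + ε/2 := add_lt_add_of_le_of_lt hGg (lt_of_le_of_lt hUunorm hnD)
        _ = ε := by ring
    · rw [map_add, hTU]
      apply hballV
      rw [mem_ball, dist_eq_norm]
      have hre : (T ^ n) G + H - h = (T ^ n) G + (H - h) := by abel
      rw [hre]
      calc ‖(T ^ n) G + (H - h)‖ ≤ ‖(T ^ n) G‖ + ‖H - h‖ := norm_add_le _ _
        _ < δ/2 + δ/2 := add_lt_add_of_lt_of_le (lt_of_le_of_lt hTG hnC) hHh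
        _ = δ := by ring
  -- PART 1 : hypercyclicity via the Baire category theorem
  have hhyp : IsHypercyclic T := by
    haveI : Fact ((2:ℝ≥0∞) ≠ ⊤) := ⟨by norm_num⟩
    haveI : SecondCountableTopology (Lp ℂ 2 (volume : Measure ℝ)) :=
      MeasureTheory.Lp.SecondCountableTopology
    haveI : Countable (TopologicalSpace.countableBasis (Lp ℂ 2 (volume : Measure ℝ))) :=
      (TopologicalSpace.countable_countableBasis _).to_subtype
    set D : TopologicalSpace.countableBasis (Lp ℂ 2 (volume : Measure ℝ)) →
        Set (Lp ℂ 2 (volume : Measure ℝ)) :=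
      fun o => ⋃ (m : ℕ) (_ : 1 ≤ m), (fun f => (T ^ m) f) ⁻¹' (o : Set _) with hD
    have hDopen : ∀ o, IsOpen (D o) := fun o =>
      isOpen_iUnion fun m => isOpen_iUnion fun _ =>
        (TopologicalSpace.isOpen_of_mem_countableBasis o.2).preimage (T ^ m).continuous
    have hDdense : ∀ o, Dense (D o) := by
      intro o
      rw [dense_iff_inter_open]
      intro U hU hUne
      obtain ⟨f, hfU, m, hm1, hfV⟩ := htrans U o hU
        (TopologicalSpace.isOpen_of_mem_countableBasis o.2) hUne
        (TopologicalSpace.nonempty_of_mem_countableBasis o.2)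
      exact ⟨f, hfU, Set.mem_iUnion.mpr ⟨m, Set.mem_iUnion.mpr ⟨hm1, hfV⟩⟩⟩
    have hdense := dense_iInter_of_isOpen hDopen hDdense
    have hsub : (⋂ o, D o) ⊆
        {f : Lp ℂ 2 (volume : Measure ℝ) |
          Dense {y | ∃ m : ℕ, 1 ≤ m ∧ y = (T ^ m) f}} := by
      intro f hf
      rw [Set.mem_setOf_eq,
        (TopologicalSpace.isBasis_countableBasis (Lp ℂ 2 (volume : Measure ℝ))).dense_iff]
      intro o ho hone
      have hfo := Set.mem_iInter.mp hf ⟨o, ho⟩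
      simp only [hD, Set.mem_iUnion] at hfo
      obtain ⟨m, hm1, hfm⟩ := hfo
      exact ⟨(T ^ m) f, hfm, m, hm1, rfl⟩
    exact Dense.mono hsub hdense
  exact ⟨hhyp, hnc⟩
end

section
/- Let B be the bilateral backward weighted shift on ℓ²(ℤ) determined by the weight sequence (w_j)_{j∈ℤ} with w_j = 2 for all j < 0 and w_j = 1/2 for all j ≥ 0, i.e. B e_j = w_j e_{j−1} for every j ∈ ℤ, where (e_j)_{j∈ℤ} is the canonical orthonormal basis. Then B is not hypercyclic on ℓ²(ℤ); that is, there is no x ∈ ℓ²(ℤ) whose orbit { Bⁿx : n ∈ ℕ } is dense in ℓ²(ℤ). -/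
open scoped ComplexOrder

local notation "H" => lp (fun _ : ℤ => ℂ) 2

noncomputable def e (j : ℤ) : lp (fun _ : ℤ => ℂ) 2 := lp.single 2 j 1

lemma coord_eq_inner (v : lp (fun _ : ℤ => ℂ) 2) (k : ℤ) :
    v k = @inner ℂ _ _ (e k) v := by
  rw [e, lp.inner_single_left, RCLike.inner_apply, map_one, mul_one]

theorem backward_shift_not_hypercyclic
    (w : ℤ → ℂ)
    (hw_neg : ∀ j : ℤ, j < 0 → w j = 2)
    (hw_nonneg : ∀ j : ℤ, 0 ≤ j → w j = 1 / 2)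
    (B : lp (fun _ : ℤ => ℂ) 2 →L[ℂ] lp (fun _ : ℤ => ℂ) 2)
    (hB : ∀ j : ℤ, B (lp.single 2 j 1) = w j • lp.single 2 (j - 1) 1) :
    ¬ ∃ x : lp (fun _ : ℤ => ℂ) 2,
        Dense {y : lp (fun _ : ℤ => ℂ) 2 | ∃ n : ℕ, 1 ≤ n ∧ y = (B ^ n) x} := by
  rintro ⟨x, hx⟩
  set A := ContinuousLinearMap.adjoint B with hA
  -- adjoint on basis vectors with nonnegative index
  have hAe : ∀ j : ℤ, 0 ≤ j → A (e j) = (1/2 : ℂ) • e (j+1) := by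
    intro j hj
    apply lp.ext
    funext k
    have hL : (A (e j)) k = @inner ℂ _ _ (B (e k)) (e j) := by
      rw [coord_eq_inner, hA, ContinuousLinearMap.adjoint_inner_right]
    rw [hL, e, hB k]
    rw [inner_smul_left, lp.inner_single_left]
    simp only [e, RCLike.inner_apply, map_one, one_mul]
    simp only [lp.single_apply]
    by_cases hk : k = j + 1
    · subst hk
      have hj1 : (j + 1 - 1 : ℤ) = j := by ring
      rw [hj1, Pi.single_eq_same, hw_nonneg (j+1) (by omega)]
      have hR : ((1/2 : ℂ) • lp.single 2 (j+1) (1:ℂ) : lp (fun _ : ℤ => ℂ) 2) (j+1)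
          = 1/2 := by
        rw [lp.coeFn_smul, Pi.smul_apply, lp.single_apply_self]
        simp
      rw [hR]
      simp [map_div₀, Complex.conj_ofNat]
    · have h1 : (k - 1 : ℤ) ≠ j := by omega
      rw [Pi.single_eq_of_ne h1, zero_mul, mul_zero]
      have hR : ((1/2 : ℂ) • lp.single 2 (j+1) (1:ℂ) : lp (fun _ : ℤ => ℂ) 2) k = 0 := by
        rw [lp.coeFn_smul, Pi.smul_apply,
          lp.single_apply_ne (E := fun _ : ℤ => ℂ) 2 (j+1) (1:ℂ) hk, smul_zero]
      rw [hR]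
  -- powers of the adjoint on e 0
  have hAn : ∀ n : ℕ, (A ^ n) (e 0) = ((1/2 : ℂ) ^ n) • e n := by
    intro n
    induction n with
    | zero => simp
    | succ n ih =>
      rw [pow_succ', ContinuousLinearMap.mul_apply, ih, map_smul,
        hAe n (by positivity)]
      rw [smul_smul]
      push_cast
      rw [← pow_succ]
  -- coordinate 0 of orbit points
  have hcoord : ∀ n : ℕ, ((B ^ n) x) 0 = ((1/2 : ℂ) ^ n) * x n := by
    intro n
    rw [coord_eq_inner]
    have h1 : @inner ℂ _ _ (e 0) ((B ^ n) x)
        = @inner ℂ _ _ ((ContinuousLinearMap.adjoint (B ^ n)) (e 0)) x := by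
      rw [ContinuousLinearMap.adjoint_inner_left]
    rw [h1]
    have h2 : ContinuousLinearMap.adjoint (B ^ n) = A ^ n := by
      rw [hA, ← ContinuousLinearMap.star_eq_adjoint, ← ContinuousLinearMap.star_eq_adjoint,
        star_pow]
    rw [h2, hAn n, inner_smul_left]
    rw [← coord_eq_inner]
    congr 1
    simp [map_pow, map_div₀, Complex.conj_ofNat]
  -- bound on coordinate 0
  have hbound : ∀ n : ℕ, 1 ≤ n → ‖((B ^ n) x) 0‖ ≤ ‖x‖ / 2 := by
    intro n hn
    rw [hcoord]
    rw [norm_mul, norm_pow]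
    have h1 : ‖x n‖ ≤ ‖x‖ := lp.norm_apply_le_norm (by norm_num) x n
    have h2 : ‖(1/2 : ℂ)‖ = 1/2 := by norm_num
    rw [h2]
    calc (1/2 : ℝ) ^ n * ‖x n‖ ≤ (1/2) ^ 1 * ‖x‖ := by
          apply mul_le_mul _ h1 (norm_nonneg _) (by positivity)
          exact pow_le_pow_of_le_one (by norm_num) (by norm_num) hn
      _ = ‖x‖ / 2 := by ring
  -- target point
  set c : ℂ := ((‖x‖ + 1 : ℝ) : ℂ) with hc
  have hmem := hx.exists_dist_lt (c • e 0) (by norm_num : (0:ℝ) < 1/2)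
  obtain ⟨y, ⟨n, hn1, rfl⟩, hdist⟩ := hmem
  have hdiff : ‖(c • e 0 - (B ^ n) x) 0‖ ≤ ‖c • e 0 - (B ^ n) x‖ :=
    lp.norm_apply_le_norm (by norm_num) _ 0
  rw [← dist_eq_norm] at hdiff
  have h0 : (c • e 0 - (B ^ n) x) 0 = c - ((B ^ n) x) 0 := by
    have : ((c • e 0 : lp (fun _ : ℤ => ℂ) 2)) 0 = c := by
      simp [e, lp.single_apply_self]
    simp only [lp.coeFn_sub, Pi.sub_apply, this]
  rw [h0] at hdiff
  have hcn : ‖c‖ = ‖x‖ + 1 := by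
    rw [hc]
    rw [Complex.norm_real, Real.norm_of_nonneg (by positivity)]
  have h4 := hbound n hn1
  have h5 : ‖c - ((B ^ n) x) 0‖ < 1/2 := lt_of_le_of_lt hdiff hdist
  have h6 : (0:ℝ) ≤ ‖x‖ := norm_nonneg x
  nlinarith [norm_sub_norm_le c (((B ^ n) x) 0)]
end

section
/- Let T be the bilateral weighted forward shift on ℓ²(ℤ) determined by the weight sequence (w_j)_{j∈ℤ} with w_{−j} = (j+1)/j for all j ∈ ℕ (j ≥ 1) and w_j = 1/2 for all j ≥ 0, i.e. T e_j = w_j e_{j+1} for every j ∈ ℤ, where (e_j)_{j∈ℤ} is the canonical orthonormal basis. Then T is hypercyclic on ℓ²(ℤ) (there exists x whose orbit { Tⁿx : n ∈ ℕ } is dense), but T is not Cesàro hypercyclic on ℓ²(ℤ) (there is no x ∈ ℓ²(ℤ) such that the set { n⁻¹·Tⁿx : n ≥ 1 } is dense in ℓ²(ℤ)). -/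
open scoped ENNReal
open Filter Finset Topology TopologicalSpace

noncomputable abbrev FS_Hs := lp (fun _ : ℤ => ℂ) 2

lemma FS_single_eq_smul (j : ℤ) (a : ℂ) :
    (lp.single 2 j a : FS_Hs) = a • (lp.single 2 j 1) := by
  rw [← lp.single_smul]; simp

noncomputable def FS_ev (i : ℤ) : FS_Hs →L[ℂ] ℂ :=
  LinearMap.mkContinuous
    { toFun := fun f => f i
      map_add' := fun f g => by simp
      map_smul' := fun c f => by simp } 1
    (fun f => by
      show ‖f i‖ ≤ 1 * ‖f‖
      simpa using lp.norm_apply_le_norm (E := fun _ : ℤ => ℂ) (by norm_num) f i)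

@[simp] lemma FS_ev_apply (i : ℤ) (f : FS_Hs) : FS_ev i f = f i := rfl

lemma FS_norm_single_one (i : ℤ) : ‖(lp.single 2 i (1:ℂ) : FS_Hs)‖ = 1 := by
  have := lp.norm_single (E := fun _ : ℤ => ℂ) (p := 2)
    (by norm_num : (0:ℝ≥0∞) < 2) i (1:ℂ)
  simpa using this

section FS

variable {w : ℤ → ℂ} {T : FS_Hs →L[ℂ] FS_Hs}
  (hw_neg : ∀ j : ℕ, 1 ≤ j → w (-(j : ℤ)) = ((j : ℂ) + 1) / (j : ℂ))
  (hw_nonneg : ∀ j : ℤ, 0 ≤ j → w j = 1 / 2)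
  (hT : ∀ j : ℤ, T (lp.single 2 j 1) = w j • lp.single 2 (j + 1) 1)

set_option linter.unusedSectionVars false

include hT in
lemma FS_Tpow_single (n : ℕ) (j : ℤ) :
    (T ^ n) (lp.single 2 j 1) =
      (∏ k ∈ Finset.range n, w (j + k)) • lp.single 2 (j + n) 1 := by
  induction n generalizing j with
  | zero => simp
  | succ n ih =>
    rw [pow_succ, ContinuousLinearMap.mul_apply, hT, map_smul, ih]
    rw [smul_smul, Finset.prod_range_succ']
    have h1 : ∀ k ∈ Finset.range n, w (j + 1 + (k : ℤ)) = w (j + ((k:ℕ)+1 : ℕ)) := by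
      intro k _; congr 1; push_cast; ring
    rw [Finset.prod_congr rfl h1]
    have e1 : j + (0:ℕ) = j := by push_cast; ring
    have e2 : j + 1 + (n:ℤ) = j + ((n+1 : ℕ):ℤ) := by push_cast; ring
    rw [e1, e2, mul_comm]

include hT in
lemma FS_coord (x : FS_Hs) (n : ℕ) (i : ℤ) :
    ((T ^ n) x) i = x (i - n) * (∏ k ∈ Finset.range n, w (i - n + k)) := by
  have h0 : HasSum (fun j : ℤ => lp.single 2 j (x j : ℂ)) x :=
    lp.hasSum_single (by norm_num) x
  have h1 := ((FS_ev i).comp (T ^ n)).hasSum h0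
  have h2 : ∀ j : ℤ,
      ((FS_ev i).comp (T ^ n)) (lp.single 2 j (x j)) =
        if j = i - n then x (i - n) * (∏ k ∈ Finset.range n, w (i - n + k)) else 0 := by
    intro j
    rw [FS_single_eq_smul, map_smul, ContinuousLinearMap.comp_apply,
      FS_Tpow_single hT n j, map_smul]
    rcases eq_or_ne j (i - n) with h | h
    · subst h
      have : i - (n:ℤ) + n = i := by ring
      simp only [if_pos rfl, smul_eq_mul, FS_ev_apply, this, lp.single_apply_self, if_true]
      ring
    · rw [if_neg h]
      have : i ≠ j + n := by omega
      simp only [smul_eq_mul, FS_ev_apply]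
      rw [lp.single_apply_ne 2 _ _ this]
      ring
  have h3 : HasSum (fun j : ℤ =>
      if j = i - n then x (i - n) * (∏ k ∈ Finset.range n, w (i - n + k)) else 0)
      (((FS_ev i).comp (T ^ n)) x) := by
    simpa only [h2] using h1
  have h4 := h3.unique (hasSum_ite_eq (i - n) _)
  simpa using h4

include hw_neg hw_nonneg in
lemma FS_hw_ne (j : ℤ) : w j ≠ 0 := by
  rcases le_or_gt 0 j with h | h
  · rw [hw_nonneg j h]; norm_num
  · set m : ℕ := (-j).toNat with hm
    have h1 : 1 ≤ m := by omega
    have h2 : -(m : ℤ) = j := by omega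
    rw [← h2, hw_neg m h1]
    have hm0 : ((m : ℂ)) ≠ 0 := Nat.cast_ne_zero.2 (by omega)
    have hm1 : ((m : ℂ) + 1) ≠ 0 := by
      have := Nat.cast_add_one_ne_zero (R := ℂ) m
      simpa using this
    exact div_ne_zero hm1 hm0

include hw_neg in
lemma FS_prod_back {j : ℤ} (hj : j ≤ 0) (n : ℕ) :
    ∏ k ∈ Finset.range n, w (j - 1 - k) = ((n : ℂ) + 1 - (j:ℂ)) / (1 - (j:ℂ)) := by
  have hden : (1 : ℂ) - (j:ℂ) ≠ 0 := by
    intro h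
    have : ((1 - j : ℤ) : ℂ) = 0 := by push_cast; linear_combination h
    rw [Int.cast_eq_zero] at this; omega
  induction n with
  | zero => simp [div_self hden]
  | succ n ih =>
    rw [Finset.prod_range_succ, ih]
    set m : ℕ := (1 + n - j).toNat with hm
    have h1 : 1 ≤ m := by omega
    have h2 : -(m : ℤ) = j - 1 - n := by omega
    have hmZ : (m:ℤ) = 1 + n - j := by omega
    have hmC : ((m : ℂ)) = (n:ℂ) + 1 - (j:ℂ) := by
      have : ((m:ℤ):ℂ) = ((1 + (n:ℤ) - j : ℤ) : ℂ) := by rw [hmZ]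
      push_cast at this
      linear_combination this
    have hnum : (n:ℂ) + 1 - (j:ℂ) ≠ 0 := by
      rw [← hmC]
      exact Nat.cast_ne_zero.2 (by omega)
    rw [← h2, hw_neg m h1, hmC]
    field_simp
    push_cast
    ring

lemma FS_prod_reflect (w : ℤ → ℂ) (j : ℤ) (n : ℕ) :
    ∏ k ∈ Finset.range n, w (j - n + k) = ∏ k ∈ Finset.range n, w (j - 1 - k) := by
  rw [← Finset.prod_range_reflect (fun k => w (j - n + k)) n]
  refine Finset.prod_congr rfl (fun k hk => ?_)
  rw [Finset.mem_range] at hk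
  congr 1
  have : ((n - 1 - k : ℕ) : ℤ) = (n:ℤ) - 1 - k := by omega
  rw [this]; ring

include hw_nonneg in
lemma FS_prod_fwd_nonneg {j : ℤ} (hj : 0 ≤ j) (n : ℕ) :
    ∏ k ∈ Finset.range n, w (j + k) = (1/2 : ℂ) ^ n := by
  rw [Finset.prod_congr rfl (fun k (_ : k ∈ Finset.range n) => hw_nonneg (j+k) (by positivity)),
    Finset.prod_const, Finset.card_range]

include hw_neg in
lemma FS_norm_prod_back {j : ℤ} (hj : j ≤ 0) (n : ℕ) :
    ‖∏ k ∈ Finset.range n, w (j - 1 - k)‖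
      = ((n + (1-j).toNat : ℕ) : ℝ) / (((1-j).toNat : ℕ) : ℝ) := by
  rw [FS_prod_back hw_neg hj n]
  set a : ℕ := (1-j).toNat with ha
  have h1 : ((n:ℂ) + 1 - (j:ℂ)) = ((n + a : ℕ) : ℂ) := by
    have : ((a:ℤ):ℂ) = ((1 - j : ℤ):ℂ) := by norm_cast; omega
    push_cast at this ⊢
    linear_combination -this
  have h2 : ((1:ℂ) - (j:ℂ)) = ((a : ℕ) : ℂ) := by
    have : ((a:ℤ):ℂ) = ((1 - j : ℤ):ℂ) := by norm_cast; omega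
    push_cast at this ⊢
    linear_combination -this
  rw [h1, h2, norm_div, Complex.norm_natCast, Complex.norm_natCast]

include hw_neg hw_nonneg in
lemma FS_tendsto_norm_prod_back_inv (j : ℤ) :
    Tendsto (fun n : ℕ => ‖(∏ k ∈ Finset.range n, w (j - 1 - k))⁻¹‖) atTop (𝓝 0) := by
  have key : ∀ (a : ℕ), Tendsto (fun n : ℕ => (a:ℝ) / ((n:ℝ) + a)) atTop (𝓝 0) := by
    intro a
    exact Tendsto.div_atTop tendsto_const_nhds
      (tendsto_atTop_add_const_right atTop _ tendsto_natCast_atTop_atTop)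
  rcases le_or_gt j 0 with hj | hj
  · set a : ℕ := (1-j).toNat with ha
    have ha1 : 1 ≤ a := by omega
    have heq : ∀ n : ℕ, ‖(∏ k ∈ Finset.range n, w (j - 1 - k))⁻¹‖
        = (a:ℝ) / ((n:ℝ) + a) := by
      intro n
      rw [norm_inv, FS_norm_prod_back hw_neg hj n, inv_div]
      push_cast; ring_nf
      rw [← ha]; ring
    simpa only [heq] using key a
  · set m : ℕ := j.toNat with hm
    rw [← tendsto_add_atTop_iff_nat m]
    have heq : ∀ l : ℕ, ‖(∏ k ∈ Finset.range (l + m), w (j - 1 - k))⁻¹‖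
        = ‖(∏ k ∈ Finset.range m, w (j - 1 - k))⁻¹‖ * (1 / ((l:ℝ) + 1)) := by
      intro l
      rw [add_comm l m, Finset.prod_range_add]
      have h2 : ∀ k ∈ Finset.range l, w (j - 1 - (m + k : ℕ)) = w (0 - 1 - k) := by
        intro k _; congr 1; omega
      rw [Finset.prod_congr rfl h2]
      simp only [mul_inv, norm_mul, norm_inv]
      rw [FS_norm_prod_back hw_neg le_rfl l]
      have : (1 - (0:ℤ)).toNat = 1 := rfl
      rw [this]
      push_cast
      rw [inv_div]
    simp only [heq]
    rw [← mul_zero (‖(∏ k ∈ Finset.range m, w (j - 1 - k))⁻¹‖)]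
    exact Tendsto.const_mul _ (by simpa using key 1)

include hw_nonneg hT in
lemma FS_fwd_tendsto (j : ℤ) :
    Tendsto (fun n : ℕ => ‖(T ^ n) (lp.single 2 j (1:ℂ))‖) atTop (𝓝 0) := by
  set n0 := (-j).toNat with hn0
  rw [← tendsto_add_atTop_iff_nat n0]
  have heq : ∀ l : ℕ, ‖(T ^ (l + n0)) (lp.single 2 j (1:ℂ))‖
      = ‖(∏ k ∈ Finset.range n0, w (j + k))‖ * (1/2:ℝ)^l := by
    intro l
    rw [pow_add, ContinuousLinearMap.mul_apply, FS_Tpow_single hT n0 j, map_smul,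
      FS_Tpow_single hT l (j + n0), FS_prod_fwd_nonneg hw_nonneg (by omega : (0:ℤ) ≤ j + n0) l]
    rw [norm_smul, norm_smul, FS_norm_single_one, norm_pow]
    norm_num
  simp only [heq]
  rw [← mul_zero (‖∏ k ∈ Finset.range n0, w (j + k)‖)]
  exact Tendsto.const_mul _ (tendsto_pow_atTop_nhds_zero_of_lt_one (by norm_num) (by norm_num))

include hw_neg hw_nonneg hT in
lemma FS_back_apply (j : ℤ) (n : ℕ) :
    (T ^ n) (((∏ k ∈ Finset.range n, w (j - 1 - k))⁻¹) • lp.single 2 (j - n) 1)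
      = lp.single 2 j 1 := by
  rw [map_smul, FS_Tpow_single hT n (j - n), FS_prod_reflect w, smul_smul,
    inv_mul_cancel₀ (Finset.prod_ne_zero_iff.2 fun k _ => FS_hw_ne hw_neg hw_nonneg _), one_smul]
  congr 1
  ring

end FS

lemma FS_dense_span :
    Dense (↑(Submodule.span ℂ (Set.range fun j : ℤ => (lp.single 2 j 1 : FS_Hs))) : Set FS_Hs) := by
  intro f
  have h0 : HasSum (fun i : ℤ => lp.single 2 i (f i : ℂ)) f :=
    lp.hasSum_single (by norm_num) f
  refine mem_closure_of_tendsto h0 (Filter.Eventually.of_forall fun s => ?_)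
  refine Submodule.sum_mem _ (fun i _ => ?_)
  rw [FS_single_eq_smul]
  exact Submodule.smul_mem _ _ (Submodule.subset_span ⟨i, rfl⟩)

lemma FS_sep : SeparableSpace FS_Hs := by
  have hc : (Set.range fun j : ℤ => (lp.single 2 j 1 : FS_Hs)).Countable := Set.countable_range _
  have h1 : IsSeparable (↑(Submodule.span ℂ
      (Set.range fun j : ℤ => (lp.single 2 j 1 : FS_Hs))) : Set FS_Hs) := hc.isSeparable.span
  have h2 := h1.closure
  rw [FS_dense_span.closure_eq] at h2
  exact isSeparable_univ_iff.1 h2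

section FS2

variable {w : ℤ → ℂ} {T : FS_Hs →L[ℂ] FS_Hs}
  (hw_neg : ∀ j : ℕ, 1 ≤ j → w (-(j : ℤ)) = ((j : ℂ) + 1) / (j : ℂ))
  (hw_nonneg : ∀ j : ℤ, 0 ≤ j → w j = 1 / 2)
  (hT : ∀ j : ℤ, T (lp.single 2 j 1) = w j • lp.single 2 (j + 1) 1)

set_option linter.unusedSectionVars false

include hw_neg hw_nonneg hT in
lemma FS_transitive (U V : Set FS_Hs) (hU : IsOpen U) (hV : IsOpen V)
    (hUne : U.Nonempty) (hVne : V.Nonempty) (N : ℕ) :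
    ∃ n, N ≤ n ∧ ∃ z ∈ U, (T ^ n) z ∈ V := by
  obtain ⟨u, huU, huS⟩ := FS_dense_span.inter_open_nonempty U hU hUne
  obtain ⟨v, hvV, hvS⟩ := FS_dense_span.inter_open_nonempty V hV hVne
  rw [SetLike.mem_coe, Finsupp.mem_span_range_iff_exists_finsupp] at huS hvS
  obtain ⟨c, hc⟩ := huS
  obtain ⟨d, hd⟩ := hvS
  obtain ⟨εU, hεU, hballU⟩ := Metric.isOpen_iff.1 hU u huU
  obtain ⟨εV, hεV, hballV⟩ := Metric.isOpen_iff.1 hV v hvV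
  set B : ℕ → FS_Hs := fun n => d.sum fun j a =>
    a • (((∏ k ∈ Finset.range n, w (j - 1 - k))⁻¹) • lp.single 2 (j - n) 1) with hB
  have hTB : ∀ n, (T ^ n) (B n) = v := by
    intro n
    rw [hB, map_finsuppSum]
    rw [← hd]
    exact Finsupp.sum_congr fun j _ => by
      rw [map_smul, FS_back_apply hw_neg hw_nonneg hT j n]
  have hBnorm : ∀ n, ‖B n‖ ≤
      ∑ j ∈ d.support, ‖d j‖ * ‖(∏ k ∈ Finset.range n, w (j - 1 - k))⁻¹‖ := by
    intro n
    refine (norm_sum_le _ _).trans ?_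
    refine Finset.sum_le_sum fun j _ => ?_
    rw [norm_smul, norm_smul, FS_norm_single_one, mul_one]
  have hBto : Tendsto (fun n => ‖B n‖) atTop (𝓝 0) := by
    refine squeeze_zero (fun n => norm_nonneg _) hBnorm ?_
    have := tendsto_finset_sum (d.support) fun j _ =>
      (FS_tendsto_norm_prod_back_inv hw_neg hw_nonneg j).const_mul ‖d j‖
    simpa only [mul_zero, Finset.sum_const_zero] using this
  have hTu : ∀ n : ℕ, (T ^ n) u = c.sum fun j a => a • (T ^ n) (lp.single 2 j 1) := by
    intro n
    rw [← hc, map_finsuppSum]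
    exact Finsupp.sum_congr fun j _ => by rw [map_smul]
  have hTunorm : ∀ n : ℕ, ‖(T ^ n) u‖ ≤
      ∑ j ∈ c.support, ‖c j‖ * ‖(T ^ n) (lp.single 2 j 1)‖ := by
    intro n
    rw [hTu n]
    refine (norm_sum_le _ _).trans ?_
    exact Finset.sum_le_sum fun j _ => by rw [norm_smul]
  have hTuto : Tendsto (fun n => ‖(T ^ n) u‖) atTop (𝓝 0) := by
    refine squeeze_zero (fun n => norm_nonneg _) hTunorm ?_
    have := tendsto_finset_sum (c.support) fun j _ =>
      (FS_fwd_tendsto hw_nonneg hT j).const_mul ‖c j‖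
    simpa only [mul_zero, Finset.sum_const_zero] using this
  have h1 : ∀ᶠ n in atTop, ‖B n‖ < εU := hBto.eventually_lt_const hεU
  have h2 : ∀ᶠ n in atTop, ‖(T ^ n) u‖ < εV := hTuto.eventually_lt_const hεV
  have h3 : ∀ᶠ n in atTop, N ≤ n := eventually_ge_atTop N
  obtain ⟨n, hn1, hn2, hn3⟩ :=
    ((h1.and (h2.and h3)).exists : ∃ n, ‖B n‖ < εU ∧ ‖(T ^ n) u‖ < εV ∧ N ≤ n)
  refine ⟨n, hn3, u + B n, ?_, ?_⟩
  · apply hballU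
    rw [Metric.mem_ball, dist_eq_norm, add_sub_cancel_left]
    exact hn1
  · apply hballV
    rw [map_add, hTB n, Metric.mem_ball, dist_eq_norm, add_sub_cancel_right]
    exact hn2

include hw_neg hw_nonneg hT in
lemma FS_hypercyclic :
    ∃ x : FS_Hs, Dense {y : FS_Hs | ∃ n : ℕ, 1 ≤ n ∧ y = (T ^ n) x} := by
  haveI := FS_sep
  obtain ⟨D, hDc, hDd⟩ := TopologicalSpace.exists_countable_dense FS_Hs
  haveI : Countable D := hDc.to_subtype
  set G : D × {q : ℚ // 0 < q} → Set FS_Hs := fun p =>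
    ⋃ n ∈ {n : ℕ | 1 ≤ n}, (T ^ n) ⁻¹' (Metric.ball (p.1 : FS_Hs) ((p.2 : ℚ) : ℝ)) with hG
  have hGopen : ∀ p, IsOpen (G p) := by
    intro p
    exact isOpen_biUnion fun n _ => (T ^ n).continuous.isOpen_preimage _ Metric.isOpen_ball
  have hGdense : ∀ p, Dense (G p) := by
    intro p
    rw [dense_iff_inter_open]
    intro U hU hUne
    obtain ⟨n, hn, z, hzU, hzV⟩ := FS_transitive hw_neg hw_nonneg hT U
      (Metric.ball (p.1 : FS_Hs) ((p.2 : ℚ) : ℝ)) hU Metric.isOpen_ball hUne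
      (Metric.nonempty_ball.2 (by exact_mod_cast p.2.2)) 1
    exact ⟨z, hzU, Set.mem_biUnion hn hzV⟩
  have hdense : Dense (⋂ p, G p) := dense_iInter_of_isOpen hGopen hGdense
  obtain ⟨x, hx⟩ := hdense.nonempty
  refine ⟨x, Metric.dense_iff.2 fun y r hr => ?_⟩
  obtain ⟨d, hd1, hd2⟩ := Metric.dense_iff.1 hDd y (r/2) (by linarith)
  obtain ⟨q, hq1, hq2⟩ := exists_rat_btwn (show (0:ℝ) < r/2 by linarith)
  have hq0 : (0:ℚ) < q := by exact_mod_cast hq1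
  have hxG := Set.mem_iInter.1 hx (⟨⟨d, hd2⟩, ⟨q, hq0⟩⟩ : D × {q : ℚ // 0 < q})
  simp only [hG, Set.mem_iUnion, Set.mem_setOf_eq] at hxG
  obtain ⟨n, hn1, hxn⟩ := hxG
  refine ⟨(T ^ n) x, Metric.mem_ball.2 ?_, ⟨n, hn1, rfl⟩⟩
  have hxn' : dist ((T ^ n) x) d < (q:ℝ) := Metric.mem_ball.1 hxn
  calc dist ((T ^ n) x) y ≤ dist ((T ^ n) x) d + dist d y := dist_triangle _ _ _
    _ < q + r/2 := add_lt_add hxn' hd1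
    _ ≤ r/2 + r/2 := by linarith
    _ = r := by ring

include hw_neg hT in
lemma FS_not_cesaro :
    ¬ ∃ x : FS_Hs, Dense {y : FS_Hs | ∃ n : ℕ, 1 ≤ n ∧ y = ((n : ℂ))⁻¹ • (T ^ n) x} := by
  rintro ⟨x, hx⟩
  set R := ‖x‖ with hR
  have hR0 : 0 ≤ R := norm_nonneg x
  set t : FS_Hs := ((2*R+3 : ℝ) : ℂ) • lp.single 2 0 1 with ht
  obtain ⟨y, hyb, hyS⟩ := Metric.dense_iff.1 hx t 1 one_pos
  obtain ⟨n, hn1, rfl⟩ := hyS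
  have hcoord : ((T ^ n) x) 0 = x (0 - n) * (((n:ℂ) + 1) / 1) := by
    rw [FS_coord hT x n 0, FS_prod_reflect w 0 n, FS_prod_back hw_neg le_rfl n]
    norm_num
  have hy0 : (((n : ℂ))⁻¹ • (T ^ n) x) 0 = (n:ℂ)⁻¹ * (x (0 - n) * ((n:ℂ) + 1)) := by
    have := lp.coeFn_smul ((n:ℂ)⁻¹) ((T ^ n) x)
    calc (((n : ℂ))⁻¹ • (T ^ n) x) 0 = (n:ℂ)⁻¹ * ((T ^ n) x) 0 := by
          rw [this]; simp
      _ = (n:ℂ)⁻¹ * (x (0 - n) * ((n:ℂ) + 1)) := by rw [hcoord]; ring_nf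
  have hxb : ‖x (0 - (n:ℤ))‖ ≤ R :=
    lp.norm_apply_le_norm (E := fun _ : ℤ => ℂ) (by norm_num) x _
  have hnn : (1:ℝ) ≤ n := by exact_mod_cast hn1
  have hb : ‖(((n : ℂ))⁻¹ • (T ^ n) x) 0‖ ≤ 2 * R := by
    rw [hy0]
    rw [norm_mul, norm_mul, norm_inv]
    have h1 : ‖((n:ℂ))‖ = (n:ℝ) := by simp
    have h2 : ‖((n:ℂ) + 1)‖ = (n:ℝ) + 1 := by
      have : ((n:ℂ) + 1) = (((n+1 : ℕ)):ℂ) := by push_cast; ring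
      rw [this, Complex.norm_natCast]; push_cast; ring
    rw [h1, h2]
    have hn0 : (0:ℝ) < n := by linarith
    calc (n:ℝ)⁻¹ * (‖x (0 - (n:ℤ))‖ * ((n:ℝ) + 1))
        ≤ (n:ℝ)⁻¹ * (R * ((n:ℝ) + 1)) := by gcongr
      _ = R * (((n:ℝ) + 1) / n) := by
          field_simp
          try ring
      _ ≤ R * 2 := by
          gcongr
          rw [div_le_iff₀ hn0]; linarith
      _ = 2 * R := by ring
  have ht0 : (t : ∀ _ : ℤ, ℂ) 0 = ((2*R+3 : ℝ) : ℂ) := by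
    rw [ht]
    have := lp.coeFn_smul (((2*R+3 : ℝ) : ℂ)) (lp.single 2 (0:ℤ) (1:ℂ) : FS_Hs)
    rw [this]
    simp [lp.single_apply_self]
  have hdiff : ‖(((n : ℂ))⁻¹ • (T ^ n) x) 0 - (t : ∀ _ : ℤ, ℂ) 0‖ < 1 := by
    have h3 : ‖((n : ℂ))⁻¹ • (T ^ n) x - t‖ < 1 := by
      rw [← dist_eq_norm]
      exact Metric.mem_ball.1 hyb
    have h4 := lp.norm_apply_le_norm (E := fun _ : ℤ => ℂ) (p := 2) (by norm_num)
      (((n : ℂ))⁻¹ • (T ^ n) x - t) 0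
    rw [lp.coeFn_sub] at h4
    simp only [Pi.sub_apply] at h4
    exact lt_of_le_of_lt h4 h3
  rw [ht0] at hdiff
  have h6 : ‖((2*R+3 : ℝ) : ℂ)‖ = 2*R+3 := by
    rw [Complex.norm_real, Real.norm_of_nonneg (show (0:ℝ) ≤ 2*R+3 by linarith)]
  have h7 : 2*R + 3 - 2*R ≤ ‖(((n : ℂ))⁻¹ • (T ^ n) x) 0 - ((2*R+3 : ℝ) : ℂ)‖ := by
    calc 2*R + 3 - 2*R ≤ ‖((2*R+3 : ℝ) : ℂ)‖ - ‖(((n : ℂ))⁻¹ • (T ^ n) x) 0‖ := by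
          rw [h6]; linarith
      _ ≤ ‖(((n : ℂ))⁻¹ • (T ^ n) x) 0 - ((2*R+3 : ℝ) : ℂ)‖ := by
          rw [norm_sub_rev]; exact norm_sub_norm_le _ _
  linarith

end FS2

theorem forward_shift_hypercyclic_not_cesaro_hypercyclic
    (w : ℤ → ℂ)
    (hw_neg : ∀ j : ℕ, 1 ≤ j → w (-(j : ℤ)) = ((j : ℂ) + 1) / (j : ℂ))
    (hw_nonneg : ∀ j : ℤ, 0 ≤ j → w j = 1 / 2)
    (T : lp (fun _ : ℤ => ℂ) 2 →L[ℂ] lp (fun _ : ℤ => ℂ) 2)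
    (hT : ∀ j : ℤ, T (lp.single 2 j 1) = w j • lp.single 2 (j + 1) 1) :
    (∃ x : lp (fun _ : ℤ => ℂ) 2,
        Dense {y : lp (fun _ : ℤ => ℂ) 2 | ∃ n : ℕ, 1 ≤ n ∧ y = (T ^ n) x}) ∧
    ¬ ∃ x : lp (fun _ : ℤ => ℂ) 2,
        Dense {y : lp (fun _ : ℤ => ℂ) 2 | ∃ n : ℕ, 1 ≤ n ∧
          y = ((n : ℂ))⁻¹ • (T ^ n) x} := by
  exact ⟨FS_hypercyclic hw_neg hw_nonneg hT, FS_not_cesaro hw_neg hT⟩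
end
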